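/- Let f be a smooth real-valued function on an open interval I ⊆ ℝ with f'' nowhere vanishing. A three-times continuously differentiable function Y : I → ℝ satisfies the third-order ODE Y'''(X) · f''(X) = Y''(X) · f'''(X) for all X ∈ I if and only if there exist real constants c₁, c₂, c₃ such that Y(X) = c₁ f(X) + c₂ X + c₃ for all X ∈ I. -/

import Mathlib

/-- Auxiliary: a function with vanishing derivative on an open convex set is constant there. -/
lemma aux_const_of_hasDerivAt_zero {I : Set ℝ} (hI : IsOpen I) (hI' : Convex ℝ I)
    {φ : ℝ → ℝ} (hφ : ∀ x ∈ I, HasDerivAt φ 0 x) {x y : ℝ} (hx : x ∈ I) (hy : y ∈ I) :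
    φ x = φ y := by
  refine hI'.is_const_of_fderivWithin_eq_zero
    (fun z hz => ((hφ z hz).differentiableAt).differentiableWithinAt)
    (fun z hz => ?_) hx hy
  rw [fderivWithin_of_isOpen hI hz, (hφ z hz).hasFDerivAt.fderiv]
  ext
  simp

lemma aux_iteratedDeriv_two (g : ℝ → ℝ) : iteratedDeriv 2 g = deriv (deriv g) := by
  rw [show (2 : ℕ) = 1 + 1 from rfl, iteratedDeriv_succ, iteratedDeriv_one]

lemma aux_iteratedDeriv_three (g : ℝ → ℝ) : iteratedDeriv 3 g = deriv (deriv (deriv g)) := by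
  rw [show (3 : ℕ) = 2 + 1 from rfl, iteratedDeriv_succ, aux_iteratedDeriv_two]

/-- For `f` smooth with nowhere vanishing `f''` on an open interval `I`,
a `C³` function `Y` solves `Y''' f'' = Y'' f'''` on `I` if and only if
`Y = c₁ f + c₂ X + c₃` for some real constants `c₁, c₂, c₃`. -/
theorem ODE_solutions_are_affine_in_f
    (I : Set ℝ) (hI : IsOpen I) (hI' : Convex ℝ I)
    (f : ℝ → ℝ) (hf : ContDiffOn ℝ (⊤ : ℕ∞) f I)
    (hnd : ∀ x ∈ I, iteratedDeriv 2 f x ≠ 0)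
    (Y : ℝ → ℝ) (hY : ContDiffOn ℝ 3 Y I) :
    (∀ X ∈ I, iteratedDeriv 3 Y X * iteratedDeriv 2 f X
        = iteratedDeriv 2 Y X * iteratedDeriv 3 f X) ↔
    (∃ c₁ c₂ c₃ : ℝ, ∀ X ∈ I, Y X = c₁ * f X + c₂ * X + c₃) := by
  -- regularity facts
  have hf1 : ContDiffOn ℝ (⊤ : ℕ∞) (deriv f) I := hf.deriv_of_isOpen hI (by simp)
  have hf2 : ContDiffOn ℝ (⊤ : ℕ∞) (deriv (deriv f)) I := hf1.deriv_of_isOpen hI (by simp)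
  have hY1 : ContDiffOn ℝ 2 (deriv Y) I := hY.deriv_of_isOpen hI (by norm_num)
  have hY2 : ContDiffOn ℝ 1 (deriv (deriv Y)) I := hY1.deriv_of_isOpen hI (by norm_num)
  have hfd : ∀ x ∈ I, HasDerivAt f (deriv f x) x := fun x hx =>
    ((hf.contDiffAt (hI.mem_nhds hx)).differentiableAt (by simp)).hasDerivAt
  have hfd1 : ∀ x ∈ I, HasDerivAt (deriv f) (deriv (deriv f) x) x := fun x hx =>
    ((hf1.contDiffAt (hI.mem_nhds hx)).differentiableAt (by simp)).hasDerivAt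
  have hfd2 : ∀ x ∈ I, HasDerivAt (deriv (deriv f)) (deriv (deriv (deriv f)) x) x := fun x hx =>
    ((hf2.contDiffAt (hI.mem_nhds hx)).differentiableAt (by simp)).hasDerivAt
  have hYd : ∀ x ∈ I, HasDerivAt Y (deriv Y x) x := fun x hx =>
    ((hY.contDiffAt (hI.mem_nhds hx)).differentiableAt (by norm_num)).hasDerivAt
  have hYd1 : ∀ x ∈ I, HasDerivAt (deriv Y) (deriv (deriv Y) x) x := fun x hx =>
    ((hY1.contDiffAt (hI.mem_nhds hx)).differentiableAt (by norm_num)).hasDerivAt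
  have hYd2 : ∀ x ∈ I, HasDerivAt (deriv (deriv Y)) (deriv (deriv (deriv Y)) x) x := fun x hx =>
    ((hY2.contDiffAt (hI.mem_nhds hx)).differentiableAt (by norm_num)).hasDerivAt
  have hnd' : ∀ x ∈ I, deriv (deriv f) x ≠ 0 := by
    intro x hx
    have := hnd x hx
    rwa [aux_iteratedDeriv_two] at this
  constructor
  · intro hode
    rcases I.eq_empty_or_nonempty with rfl | ⟨x₀, hx₀⟩
    · exact ⟨0, 0, 0, fun X hX => absurd hX (by simp)⟩
    have hode' : ∀ x ∈ I, deriv (deriv (deriv Y)) x * deriv (deriv f) x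
        = deriv (deriv Y) x * deriv (deriv (deriv f)) x := by
      intro x hx
      have := hode x hx
      rwa [aux_iteratedDeriv_two, aux_iteratedDeriv_two, aux_iteratedDeriv_three,
        aux_iteratedDeriv_three] at this
    -- step 1 : Y'' / f'' is constant
    set g : ℝ → ℝ := fun x => deriv (deriv Y) x / deriv (deriv f) x with hg
    have hg' : ∀ x ∈ I, HasDerivAt g 0 x := by
      intro x hx
      have h := (hYd2 x hx).div (hfd2 x hx) (hnd' x hx)
      have hval : (deriv (deriv (deriv Y)) x * deriv (deriv f) x -
          deriv (deriv Y) x * deriv (deriv (deriv f)) x) / (deriv (deriv f) x) ^ 2 = 0 := by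
        rw [hode' x hx]; simp
      rwa [hval] at h
    set c₁ : ℝ := g x₀ with hc₁
    have hstep1 : ∀ x ∈ I, deriv (deriv Y) x = c₁ * deriv (deriv f) x := by
      intro x hx
      have hx0 := hnd' x₀ hx₀
      have hxx := hnd' x hx
      have h := aux_const_of_hasDerivAt_zero hI hI' hg' hx hx₀
      simp only [hg] at h
      rw [div_eq_div_iff hxx hx0] at h
      rw [hc₁]
      simp only [hg]
      field_simp
      linear_combination h
    -- step 2 : Y' - c₁ f' is constant
    set p : ℝ → ℝ := fun x => deriv Y x - c₁ * deriv f x with hp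
    have hp' : ∀ x ∈ I, HasDerivAt p 0 x := by
      intro x hx
      have h := (hYd1 x hx).sub ((hfd1 x hx).const_mul c₁)
      rwa [hstep1 x hx, sub_self] at h
    set c₂ : ℝ := p x₀ with hc₂
    have hstep2 : ∀ x ∈ I, deriv Y x = c₁ * deriv f x + c₂ := by
      intro x hx
      have h := aux_const_of_hasDerivAt_zero hI hI' hp' hx hx₀
      simp only [hp] at h
      rw [hc₂]
      simp only [hp]
      linarith [h]
    -- step 3 : Y - c₁ f - c₂ x is constant
    set q : ℝ → ℝ := fun x => Y x - c₁ * f x - c₂ * x with hq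
    have hq' : ∀ x ∈ I, HasDerivAt q 0 x := by
      intro x hx
      have h := ((hYd x hx).sub ((hfd x hx).const_mul c₁)).sub ((hasDerivAt_id' (𝕜 := ℝ) (x := x)).const_mul c₂)
      have : deriv Y x - c₁ * deriv f x - c₂ * 1 = 0 := by rw [hstep2 x hx]; ring
      rwa [this] at h
    refine ⟨c₁, c₂, q x₀, fun X hX => ?_⟩
    have h := aux_const_of_hasDerivAt_zero hI hI' hq' hX hx₀
    simp only [hq] at h ⊢
    linarith [h]
  · rintro ⟨c₁, c₂, c₃, hc⟩ X hX
    have h1 : ∀ x ∈ I, deriv Y x = c₁ * deriv f x + c₂ := by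
      intro x hx
      have hev : Y =ᶠ[nhds x] fun t => c₁ * f t + c₂ * t + c₃ := by
        filter_upwards [hI.mem_nhds hx] with t ht using hc t ht
      rw [hev.deriv_eq]
      have h := (((hfd x hx).const_mul c₁).add ((hasDerivAt_id' (𝕜 := ℝ) (x := x)).const_mul c₂)).add_const c₃
      exact h.deriv.trans (by ring)
    have h2 : ∀ x ∈ I, deriv (deriv Y) x = c₁ * deriv (deriv f) x := by
      intro x hx
      have hev : deriv Y =ᶠ[nhds x] fun t => c₁ * deriv f t + c₂ := by
        filter_upwards [hI.mem_nhds hx] with t ht using h1 t ht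
      rw [hev.deriv_eq]
      have h := ((hfd1 x hx).const_mul c₁).add_const c₂
      rw [h.deriv]
    have h3 : ∀ x ∈ I, deriv (deriv (deriv Y)) x = c₁ * deriv (deriv (deriv f)) x := by
      intro x hx
      have hev : deriv (deriv Y) =ᶠ[nhds x] fun t => c₁ * deriv (deriv f) t := by
        filter_upwards [hI.mem_nhds hx] with t ht using h2 t ht
      rw [hev.deriv_eq]
      have h := (hfd2 x hx).const_mul c₁
      rw [h.deriv]
    rw [aux_iteratedDeriv_two, aux_iteratedDeriv_two, aux_iteratedDeriv_three,
      aux_iteratedDeriv_three, h2 X hX, h3 X hX]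
    ring
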